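/- Let α ∈ (0, 1/2]. Then (j'_{1−α,1})² < 4 and (j'_{1+α,1})² < 8, where j'_{ν,1} is the first positive zero of the derivative J'_ν of the Bessel function J_ν. In particular the second and third magnetic Neumann eigenvalues of the Aharonov–Bohm operator on the unit disk satisfy λ₂^N(𝔻,α) < 4 and λ₃^N(𝔻,α) < 8. -/

import Mathlib

open Real

noncomputable def besselJ (ν x : ℝ) : ℝ :=
  ∑' n : ℕ, ((-1)^n / (n.factorial * Real.Gamma (ν + n + 1))) *
    (x / 2) ^ (2 * n) * (x / 2) ^ ν

/-- `j'_{ν,1}`, the first positive zero of the derivative of `J_ν`. -/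
noncomputable def besselJPrimeFirstZero (ν : ℝ) : ℝ :=
  sInf {x : ℝ | 0 < x ∧ deriv (besselJ ν) x = 0}

noncomputable def dd (ν : ℝ) (n : ℕ) : ℝ :=
  ((n:ℝ) + ν/2) * ((-1)^n / (n.factorial * Real.Gamma (ν + n + 1)))

noncomputable def SS (ν u : ℝ) : ℝ := ∑' n : ℕ, dd ν n * u^n

lemma gamma_step (ν : ℝ) (hν : 0 < ν) (n : ℕ) :
    Real.Gamma (ν + (n+1 : ℕ) + 1) = (ν + n + 1) * Real.Gamma (ν + n + 1) := by
  have h : (ν + (n:ℝ) + 1) ≠ 0 := by positivity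
  have h2 := Real.Gamma_add_one h
  rw [← h2]; push_cast; ring_nf

lemma gamma_pos (ν : ℝ) (hν : 0 < ν) (n : ℕ) : 0 < Real.Gamma (ν + n + 1) :=
  Real.Gamma_pos_of_pos (by positivity)

lemma gamma_ge (ν : ℝ) (hν : 0 < ν) (n : ℕ) :
    (n.factorial : ℝ) * Real.Gamma (ν + 1) ≤ Real.Gamma (ν + n + 1) := by
  induction n with
  | zero => simp
  | succ m ih =>
    rw [gamma_step ν hν m]
    have hg : 0 < Real.Gamma (ν + 1) := Real.Gamma_pos_of_pos (by positivity)
    have hgm : 0 < Real.Gamma (ν + m + 1) := gamma_pos ν hν m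
    have hle : ((m:ℝ) + 1) ≤ ν + m + 1 := by linarith
    have hfacpos : (0:ℝ) < m.factorial := by positivity
    calc ((m+1).factorial : ℝ) * Real.Gamma (ν + 1)
        = ((m:ℝ) + 1) * ((m.factorial : ℝ) * Real.Gamma (ν+1)) := by
          rw [Nat.factorial_succ]; push_cast; ring
      _ ≤ (ν + m + 1) * Real.Gamma (ν + m + 1) := by
          have h1 : (0:ℝ) ≤ (m:ℝ) + 1 := by positivity
          nlinarith

lemma nat_le_two_pow_fac (n : ℕ) : ((n:ℝ) + 1) ≤ 2^n * n.factorial := by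
  induction n with
  | zero => norm_num
  | succ m ih =>
    have hfac : (1:ℝ) ≤ m.factorial := by exact_mod_cast Nat.one_le_iff_ne_zero.mpr (Nat.factorial_ne_zero m)
    have h2 : (1:ℝ) ≤ 2^m := one_le_pow₀ (by norm_num)
    have h3 : (1:ℝ) ≤ 2^m * m.factorial := by nlinarith
    have hm : (0:ℝ) ≤ m := Nat.cast_nonneg m
    rw [Nat.factorial_succ]
    push_cast
    have : (2:ℝ)^(m+1) * ((m+1) * m.factorial) = 2*(m+1)*(2^m * m.factorial) := by ring
    rw [this]
    nlinarith

lemma hA_of {d : ℕ → ℝ} {A B : ℝ} (hd : ∀ n, |d n| ≤ A * B^n / n.factorial) : 0 ≤ A := by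
  have := hd 0
  have h0 : (0:ℝ) ≤ |d 0| := abs_nonneg _
  simp at this
  linarith

lemma summable_fact {d : ℕ → ℝ} {A B : ℝ} (hB : 0 ≤ B)
    (hd : ∀ n, |d n| ≤ A * B^n / n.factorial) (y : ℝ) :
    Summable fun n => d n * y^n := by
  have hs : Summable (fun n : ℕ => A * ((B*|y|)^n / n.factorial)) :=
    (Real.summable_pow_div_factorial (B*|y|)).mul_left A
  apply Summable.of_norm_bounded hs
  intro n
  have h1 := hd n
  have hfac : (0:ℝ) < n.factorial := by positivity
  have h2 : ‖d n * y^n‖ = |d n| * |y|^n := by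
    rw [norm_mul, norm_pow]; rfl
  rw [h2]
  calc |d n| * |y|^n ≤ (A * B^n / n.factorial) * |y|^n :=
        mul_le_mul_of_nonneg_right h1 (by positivity)
    _ = A * ((B*|y|)^n / n.factorial) := by rw [mul_pow]; ring

lemma hasDerivAt_psum {d : ℕ → ℝ} {A B : ℝ} (hB : 0 ≤ B)
    (hd : ∀ n, |d n| ≤ A * B^n / n.factorial) {y : ℝ} (hy : |y| < 3) :
    HasDerivAt (fun z => ∑' n, d n * z^n) (∑' n, d n * n * y^(n-1)) y := by
  have hA : 0 ≤ A := hA_of hd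
  apply hasDerivAt_tsum_of_isPreconnected
    (u := fun n => A * ((6*B)^n / n.factorial))
    (g' := fun n z => d n * n * z^(n-1))
    ((Real.summable_pow_div_factorial (6*B)).mul_left A)
    (Metric.isOpen_ball (x := (0:ℝ)) (ε := 3))
    (convex_ball (0:ℝ) 3).isPreconnected
  · intro n z _
    have := (hasDerivAt_pow n z).const_mul (d n)
    exact this.congr_deriv (by ring)
  · intro n z hz
    have hz3 : |z| < 3 := by simpa [Real.dist_eq] using hz
    have hfac : (0:ℝ) < n.factorial := by positivity
    have hA' : 0 ≤ A * B^n / n.factorial :=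
      div_nonneg (mul_nonneg hA (pow_nonneg hB n)) hfac.le
    have h1 : ‖d n * n * z^(n-1)‖ ≤ |d n| * n * 3^n := by
      rw [norm_mul, norm_mul]
      have hzn : ‖z^(n-1)‖ ≤ 3^n := by
        rw [norm_pow]
        calc |z|^(n-1) ≤ 3^(n-1) := pow_le_pow_left₀ (abs_nonneg z) hz3.le _
          _ ≤ 3^n := pow_le_pow_right₀ (by norm_num) (Nat.sub_le n 1)
      have heq : ‖d n‖ * ‖(n:ℝ)‖ = |d n| * n := by simp [abs_of_nonneg]
      calc ‖d n‖ * ‖(n:ℝ)‖ * ‖z^(n-1)‖ ≤ ‖d n‖ * ‖(n:ℝ)‖ * 3^n :=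
            mul_le_mul_of_nonneg_left hzn (by positivity)
        _ = |d n| * n * 3^n := by rw [heq]
    have h2 : ((n:ℝ)) ≤ 2^n := by exact_mod_cast (Nat.lt_two_pow_self (n := n)).le
    have h6 : ((6:ℝ))^n = 2^n * 3^n := by rw [← mul_pow]; norm_num
    calc ‖d n * n * z^(n-1)‖ ≤ |d n| * n * 3^n := h1
      _ ≤ (A * B^n / n.factorial) * 2^n * 3^n := by
          apply mul_le_mul (mul_le_mul (hd n) h2 (Nat.cast_nonneg n) hA')
            le_rfl (by positivity) (by positivity)
      _ = A * ((6*B)^n / n.factorial) := by rw [mul_pow, h6]; ring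
  · exact Metric.mem_ball_self (by norm_num)
  · apply summable_of_ne_finset_zero (s := {0})
    intro n hn
    simp only [Finset.mem_singleton] at hn
    rw [zero_pow hn, mul_zero]
  · simpa [Real.dist_eq] using hy

lemma dd_abs (ν : ℝ) (hν : 0 < ν) (hν' : ν ≤ 3/2) (n : ℕ) :
    |dd ν n| ≤ (1 / Real.Gamma (ν+1)) * 2^n / n.factorial := by
  have hg : 0 < Real.Gamma (ν+1) := Real.Gamma_pos_of_pos (by positivity)
  have hgn : 0 < Real.Gamma (ν + n + 1) := gamma_pos ν hν n
  have hfac : (0:ℝ) < n.factorial := by positivity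
  have h1 : |dd ν n| = ((n:ℝ) + ν/2) / (n.factorial * Real.Gamma (ν + n + 1)) := by
    unfold dd
    rw [abs_mul, abs_div, abs_pow, abs_neg, abs_one, one_pow]
    rw [abs_of_nonneg (by positivity : (0:ℝ) ≤ (n:ℝ) + ν/2),
        abs_of_pos (by positivity : (0:ℝ) < (n.factorial:ℝ) * Real.Gamma (ν + n + 1))]
    ring
  rw [h1, div_le_div_iff₀ (by positivity) hfac]
  have hge := gamma_ge ν hν n
  have hnum : ((n:ℝ) + ν/2) ≤ (n:ℝ) + 1 := by linarith
  have h2 : ((n:ℝ) + ν/2) * (n.factorial:ℝ) ≤ ((n:ℝ)+1) * n.factorial :=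
    mul_le_mul_of_nonneg_right hnum hfac.le
  have h3 : ((n:ℝ)+1) * n.factorial ≤ (2^n * n.factorial) * n.factorial :=
    mul_le_mul_of_nonneg_right (nat_le_two_pow_fac n) hfac.le
  have key : ((n:ℝ) + ν/2) * n.factorial * Real.Gamma (ν+1)
      ≤ 2^n * ((n.factorial:ℝ) * Real.Gamma (ν + n + 1)) := by
    have ha := mul_le_mul_of_nonneg_right (h2.trans h3) hg.le
    have hb := mul_le_mul_of_nonneg_left hge
      (show (0:ℝ) ≤ 2^n * n.factorial by positivity)
    nlinarith
  have heq : (1/Real.Gamma (ν+1) * 2^n) * ((n.factorial:ℝ) * Real.Gamma (ν + n + 1))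
      = 2^n * ((n.factorial:ℝ) * Real.Gamma (ν + n + 1)) / Real.Gamma (ν+1) := by
    field_simp
  rw [heq, le_div_iff₀ hg]
  exact key

lemma cc_abs (ν : ℝ) (hν : 0 < ν) (hν' : ν ≤ 3/2) (n : ℕ) :
    |(-1)^n / ((n.factorial : ℝ) * Real.Gamma (ν + n + 1))|
      ≤ (1 / Real.Gamma (ν+1)) * 2^n / n.factorial := by
  have hG : 0 < Real.Gamma (ν + n + 1) := gamma_pos ν hν n
  have hT : 0 < Real.Gamma (ν+1) := Real.Gamma_pos_of_pos (by positivity)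
  have hfac : (0:ℝ) < n.factorial := by positivity
  have hfac1 : (1:ℝ) ≤ n.factorial := by
    exact_mod_cast Nat.one_le_iff_ne_zero.mpr (Nat.factorial_ne_zero n)
  have habs : |(-1)^n / ((n.factorial:ℝ) * Real.Gamma (ν+n+1))|
      = 1/((n.factorial:ℝ) * Real.Gamma (ν+n+1)) := by
    rw [abs_div, abs_pow, abs_neg, abs_one, one_pow, abs_of_pos (by positivity)]
  rw [habs]
  have hTG : Real.Gamma (ν+1) ≤ Real.Gamma (ν+n+1) :=
    le_trans (le_mul_of_one_le_left hT.le hfac1) (gamma_ge ν hν n)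
  have step1 : 1/((n.factorial:ℝ) * Real.Gamma (ν+n+1))
      ≤ 1/((n.factorial:ℝ) * Real.Gamma (ν+1)) := by
    apply one_div_le_one_div_of_le (by positivity)
    exact mul_le_mul_of_nonneg_left hTG hfac.le
  have step2 : 1/((n.factorial:ℝ) * Real.Gamma (ν+1))
      ≤ (1 / Real.Gamma (ν+1)) * 2^n / n.factorial := by
    have hone : (1:ℝ) ≤ 2^n := one_le_pow₀ (by norm_num)
    rw [show (1 / Real.Gamma (ν+1)) * 2^n / (n.factorial:ℝ)
      = 2^n * (1/((n.factorial:ℝ) * Real.Gamma (ν+1))) by field_simp]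
    exact le_mul_of_one_le_left (by positivity) hone
  linarith

lemma dd_abs_eq (ν : ℝ) (hν : 0 < ν) (n : ℕ) :
    |dd ν n| = ((n:ℝ) + ν/2) / (n.factorial * Real.Gamma (ν + n + 1)) := by
  have hgn : 0 < Real.Gamma (ν + n + 1) := gamma_pos ν hν n
  unfold dd
  rw [abs_mul, abs_div, abs_pow, abs_neg, abs_one, one_pow]
  rw [abs_of_nonneg (by positivity : (0:ℝ) ≤ (n:ℝ) + ν/2),
      abs_of_pos (by positivity : (0:ℝ) < (n.factorial:ℝ) * Real.Gamma (ν + n + 1))]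
  ring

lemma rpow_nu_le (ν : ℝ) (hν : 0 < ν) (hν' : ν ≤ 3/2) {w : ℝ} (hw : 0 < w) (hw3 : w < 3/2) :
    w ^ ν ≤ 3 := by
  rcases le_or_gt w 1 with h | h
  · calc w ^ ν ≤ 1 := Real.rpow_le_one hw.le h hν.le
      _ ≤ 3 := by norm_num
  · have h1 : w ^ ν ≤ w ^ (2:ℝ) :=
      Real.rpow_le_rpow_of_exponent_le h.le (by linarith)
    have h2 : w ^ (2:ℝ) = w^(2:ℕ) := by
      rw [← Real.rpow_natCast w 2]; norm_num
    have h3 : w^(2:ℕ) ≤ 3 := by nlinarith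
    calc w ^ ν ≤ w ^ (2:ℝ) := h1
      _ = w^(2:ℕ) := h2
      _ ≤ 3 := h3

lemma besselJ_hasDeriv (ν : ℝ) (hν : 0 < ν) (hν' : ν ≤ 3/2) {x : ℝ} (hx : 0 < x) (hx3 : x < 3) :
    HasDerivAt (besselJ ν) ((x/2)^(ν-1) * SS ν ((x/2)^2)) x := by
  have hT : 0 < Real.Gamma (ν+1) := Real.Gamma_pos_of_pos (by positivity)
  set A : ℝ := 1 / Real.Gamma (ν+1) with hA
  have hApos : 0 < A := by positivity
  have key : HasDerivAt (fun z => ∑' n : ℕ, ((-1)^n / ((n.factorial : ℝ) * Real.Gamma (ν + n + 1))) *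
      (z / 2) ^ (2 * n) * (z / 2) ^ ν)
      (∑' n : ℕ, dd ν n * ((x/2)^2)^n * (x/2)^(ν-1)) x := by
    apply hasDerivAt_tsum_of_isPreconnected
      (u := fun n => (12 * A / x) * (6^n / n.factorial))
      (g' := fun n y => dd ν n * ((y/2)^2)^n * (y/2)^(ν-1))
      ((Real.summable_pow_div_factorial 6).mul_left _)
      isOpen_Ioo (t := Set.Ioo (x/2) 3)
      isPreconnected_Ioo
    · -- per-term derivative
      intro n y hy
      have hy0 : 0 < y := lt_trans (by positivity) hy.1
      have hy2 : 0 < y/2 := by positivity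
      have hdiv : HasDerivAt (fun y : ℝ => y/2) (1/2) y := (hasDerivAt_id y).div_const 2
      have hr : HasDerivAt (fun y : ℝ => (y/2)^ν) (ν * (y/2)^(ν-1) * (1/2)) y :=
        by have := (Real.hasDerivAt_rpow_const (p := ν) (Or.inl (ne_of_gt hy2))).comp y hdiv; exact this
      have hp : HasDerivAt (fun y : ℝ => (y/2)^(2*n)) ((2*n : ℕ) * (y/2)^(2*n-1) * (1/2)) y :=
        (hasDerivAt_pow (2*n) (y/2)).comp y hdiv
      have hmul := (hp.mul hr).const_mul ((-1)^n / ((n.factorial : ℝ) * Real.Gamma (ν + n + 1)))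
      have hfun : (fun y : ℝ => ((-1)^n / ((n.factorial : ℝ) * Real.Gamma (ν + n + 1))) *
          ((y/2)^(2*n) * (y/2)^ν))
          = fun y : ℝ => ((-1)^n / ((n.factorial : ℝ) * Real.Gamma (ν + n + 1))) *
          (y/2)^(2*n) * (y/2)^ν := by
        funext y; ring
      simp only [Pi.mul_apply] at hmul
      rw [hfun] at hmul
      refine hmul.congr_deriv ?_
      have hrw : (y/2)^ν = (y/2)^(ν-1) * (y/2) := by
        have h := Real.rpow_add hy2 (ν-1) 1
        rw [Real.rpow_one, show ν - 1 + 1 = ν by ring] at h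
        exact h
      unfold dd
      rcases n with _ | m
      · simp
        ring
      · have h2n : 2*(m+1) - 1 = 2*m+1 := by omega
        rw [h2n, hrw]
        have hps : (y/2)^(2*(m+1)) = (y/2)^(2*m+1) * (y/2) := by
          rw [show 2*(m+1) = 2*m+1+1 from by omega, pow_succ]
        have hpm : ((y/2)^2)^(m+1) = (y/2)^(2*(m+1)) := (pow_mul _ 2 (m+1)).symm
        rw [hpm, hps]
        push_cast
        ring
    · -- bound
      intro n y hy
      have hy0 : 0 < y := lt_trans (by positivity) hy.1
      have hy2 : 0 < y/2 := by positivity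
      have hy3 : y < 3 := hy.2
      have e1 : ((y/2)^2)^n ≤ 3^n := by
        apply pow_le_pow_left₀ (by positivity)
        nlinarith
      have hnu : (y/2)^ν ≤ 3 := rpow_nu_le ν hν hν' hy2 (by linarith)
      have e2 : (y/2)^(ν-1) ≤ 12 / x := by
        have hrw : (y/2)^(ν-1) = (y/2)^ν / (y/2) := by
          have h := Real.rpow_add hy2 (ν-1) 1
          rw [Real.rpow_one, show ν - 1 + 1 = ν by ring] at h
          rw [h]
          field_simp
        rw [hrw]
        have hxy : x/2 < y := hy.1
        have h4x : (y/2)⁻¹ ≤ 4 / x := by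
          rw [inv_le_iff_one_le_mul₀ hy2]
          rw [div_mul_eq_mul_div, le_div_iff₀ hx]
          nlinarith
        calc (y/2)^ν / (y/2) = (y/2)^ν * (y/2)⁻¹ := by ring
          _ ≤ 3 * (4/x) := by
            apply mul_le_mul hnu h4x (by positivity) (by norm_num)
          _ = 12 / x := by ring
      have habs : ‖dd ν n * ((y/2)^2)^n * (y/2)^(ν-1)‖
          = |dd ν n| * ((y/2)^2)^n * (y/2)^(ν-1) := by
        rw [norm_mul, norm_mul]
        rw [Real.norm_eq_abs, Real.norm_eq_abs, Real.norm_eq_abs,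
          abs_of_nonneg (by positivity : (0:ℝ) ≤ ((y/2)^2)^n),
          abs_of_nonneg (Real.rpow_nonneg hy2.le _)]
      rw [habs]
      have hdd := dd_abs ν hν hν' n
      have hfac : (0:ℝ) < n.factorial := by positivity
      calc |dd ν n| * ((y/2)^2)^n * (y/2)^(ν-1)
          ≤ (A * 2^n / n.factorial) * 3^n * (12/x) := by
            apply mul_le_mul (mul_le_mul hdd e1 (by positivity)
              (by positivity)) e2 (Real.rpow_nonneg hy2.le _) (by positivity)
        _ = (12 * A / x) * (6^n / n.factorial) := by
            have h6 : ((6:ℝ))^n = 2^n * 3^n := by rw [← mul_pow]; norm_num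
            rw [h6]; field_simp
    · -- y₀ ∈ t
      exact ⟨by linarith, hx3⟩
    · -- summable at y₀ = x
      have hs := (summable_fact (by norm_num : (0:ℝ) ≤ 2)
        (fun n => cc_abs ν hν hν' n) ((x/2)^2)).mul_right ((x/2)^ν)
      apply hs.congr
      intro n
      rw [← pow_mul]
    · exact ⟨by linarith, hx3⟩
  have heq : (∑' n : ℕ, dd ν n * ((x/2)^2)^n * (x/2)^(ν-1))
      = (x/2)^(ν-1) * SS ν ((x/2)^2) := by
    rw [tsum_mul_right]
    unfold SS
    ring
  rw [heq] at key
  exact key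

lemma SS_zero_pos (ν : ℝ) (hν : 0 < ν) : 0 < SS ν 0 := by
  have hT : 0 < Real.Gamma (ν+1) := Real.Gamma_pos_of_pos (by positivity)
  unfold SS
  rw [tsum_eq_single 0 (by intro n hn; rw [zero_pow hn, mul_zero])]
  simp only [pow_zero, mul_one]
  unfold dd
  norm_num
  positivity

lemma ratio_le (ν : ℝ) (hν : 0 < ν) (hν' : ν ≤ 3/2) {u₀ : ℝ} (h1 : 1 ≤ u₀) (h2 : u₀ ≤ 2)
    (n : ℕ) (hn : 4 ≤ n) :
    |dd ν (n+1) * u₀^(n+1)| ≤ |dd ν n * u₀^n| / 2 := by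
  have hgn : 0 < Real.Gamma (ν + n + 1) := gamma_pos ν hν n
  have hu : 0 < u₀ := by linarith
  have hfac : (0:ℝ) < n.factorial := by positivity
  have hcast : (4:ℝ) ≤ (n:ℝ) := by exact_mod_cast hn
  rw [abs_mul, abs_mul, abs_of_pos (by positivity : (0:ℝ) < u₀^(n+1)),
    abs_of_pos (by positivity : (0:ℝ) < u₀^n),
    dd_abs_eq ν hν, dd_abs_eq ν hν, gamma_step ν hν n]
  have hfs : (((n+1).factorial : ℕ) : ℝ) = ((n:ℝ)+1) * n.factorial := by
    rw [Nat.factorial_succ]; push_cast; ring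
  rw [hfs]
  have hps : u₀^(n+1) = u₀^n * u₀ := pow_succ u₀ n
  rw [hps]
  have e23 : (25:ℝ) ≤ ((n:ℝ)+1) * (ν + n + 1) := by nlinarith
  have key : (((n:ℝ)+1) + ν/2) * u₀ * 2 ≤ ((n:ℝ) + ν/2) * (((n:ℝ)+1) * (ν + n + 1)) := by
    nlinarith [mul_le_mul_of_nonneg_left e23 (show (0:ℝ) ≤ (n:ℝ)+ν/2 by positivity),
      mul_le_mul_of_nonneg_left (show u₀*2 ≤ (4:ℝ) by linarith)
        (show (0:ℝ) ≤ (n:ℝ)+1+ν/2 by positivity)]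
  rw [div_mul_eq_mul_div, div_mul_eq_mul_div, div_div,
    div_le_div_iff₀ (by positivity) (by positivity)]
  push_cast
  nlinarith [mul_le_mul_of_nonneg_right key
    (show (0:ℝ) ≤ u₀^n * ((n.factorial:ℝ) * Real.Gamma (ν+n+1)) by positivity)]

lemma tail_bound (ν : ℝ) (hν : 0 < ν) (hν' : ν ≤ 3/2) {u₀ : ℝ} (h1 : 1 ≤ u₀) (h2 : u₀ ≤ 2)
    (k : ℕ) : |dd ν (4+k) * u₀^(4+k)| ≤ |dd ν 4 * u₀^4| * (1/2)^k := by
  induction k with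
  | zero => simp
  | succ m ih =>
    have hr := ratio_le ν hν hν' h1 h2 (4+m) (by omega)
    have : (4 + (m+1)) = (4+m) + 1 := by omega
    rw [this]
    calc |dd ν ((4+m)+1) * u₀^((4+m)+1)| ≤ |dd ν (4+m) * u₀^(4+m)| / 2 := hr
      _ ≤ (|dd ν 4 * u₀^4| * (1/2)^m) / 2 := by linarith
      _ = |dd ν 4 * u₀^4| * (1/2)^(m+1) := by rw [pow_succ]; ring

lemma SS_le (ν : ℝ) (hν : 0 < ν) (hν' : ν ≤ 3/2) {u₀ : ℝ} (h1 : 1 ≤ u₀) (h2 : u₀ ≤ 2) :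
    SS ν u₀ ≤ (dd ν 0 * u₀^0 + dd ν 1 * u₀^1 + dd ν 2 * u₀^2 + dd ν 3 * u₀^3)
      + |dd ν 4 * u₀^4| * 2 := by
  have hT : 0 < Real.Gamma (ν+1) := Real.Gamma_pos_of_pos (by positivity)
  have hsum : Summable (fun n => dd ν n * u₀^n) :=
    summable_fact (by norm_num : (0:ℝ) ≤ 2) (dd_abs ν hν hν') u₀
  have hsplit := (Summable.sum_add_tsum_nat_add (f := fun n => dd ν n * u₀^n) 4 hsum).symm
  have htail : |∑' k : ℕ, dd ν (k+4) * u₀^(k+4)| ≤ |dd ν 4 * u₀^4| * 2 := by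
    have hgeo : HasSum (fun k : ℕ => |dd ν 4 * u₀^4| * (1/2)^k) (|dd ν 4 * u₀^4| * 2) := by
      have := (hasSum_geometric_of_lt_one (by norm_num : (0:ℝ) ≤ 1/2)
        (by norm_num : (1:ℝ)/2 < 1)).mul_left (|dd ν 4 * u₀^4|)
      rw [show (1:ℝ) - 1/2 = 2⁻¹ by norm_num, inv_inv] at this
      exact this
    rw [← Real.norm_eq_abs]
    apply tsum_of_norm_bounded hgeo
    intro k
    rw [Real.norm_eq_abs]
    have := tail_bound ν hν hν' h1 h2 k
    rwa [show k + 4 = 4 + k from by omega]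
  unfold SS
  rw [hsplit]
  have hfin : ∑ i ∈ Finset.range 4, dd ν i * u₀^i
      = dd ν 0 * u₀^0 + dd ν 1 * u₀^1 + dd ν 2 * u₀^2 + dd ν 3 * u₀^3 := by
    simp [Finset.sum_range_succ]
  rw [hfin]
  have := abs_le.mp htail
  linarith [this.2]

lemma SS_neg (ν : ℝ) (hν : 0 < ν) (hν' : ν ≤ 3/2) {u₀ : ℝ} (h1 : 1 ≤ u₀) (h2 : u₀ ≤ 2)
    (H : ν/2 - (1+ν/2)*u₀/(ν+1) + (2+ν/2)*u₀^2/(2*(ν+1)*(ν+2))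
      - (3+ν/2)*u₀^3/(6*(ν+1)*(ν+2)*(ν+3))
      + (4+ν/2)*u₀^4/(12*(ν+1)*(ν+2)*(ν+3)*(ν+4)) < 0) :
    SS ν u₀ < 0 := by
  have hT : 0 < Real.Gamma (ν+1) := Real.Gamma_pos_of_pos (by positivity)
  have hu : 0 < u₀ := by linarith
  have step : ∀ w : ℝ, 0 < w → Real.Gamma (w + 1) = w * Real.Gamma w :=
    fun w hw => Real.Gamma_add_one (ne_of_gt hw)
  have hg1 : Real.Gamma (ν + 1 + 1) = (ν+1) * Real.Gamma (ν+1) :=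
    step (ν+1) (by linarith)
  have hg2 : Real.Gamma (ν + 2 + 1) = (ν+2)*((ν+1) * Real.Gamma (ν+1)) := by
    rw [step (ν+2) (by linarith), show ν + 2 = (ν+1)+1 by ring, step (ν+1) (by linarith)]
  have hg3 : Real.Gamma (ν + 3 + 1) = (ν+3)*((ν+2)*((ν+1) * Real.Gamma (ν+1))) := by
    rw [step (ν+3) (by linarith), show ν + 3 = (ν+2)+1 by ring, step (ν+2) (by linarith),
      show ν + 2 = (ν+1)+1 by ring, step (ν+1) (by linarith)]
  have hg4 : Real.Gamma (ν + 4 + 1) = (ν+4)*((ν+3)*((ν+2)*((ν+1) * Real.Gamma (ν+1)))) := by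
    rw [step (ν+4) (by linarith), show ν + 4 = (ν+3)+1 by ring, step (ν+3) (by linarith),
      show ν + 3 = (ν+2)+1 by ring, step (ν+2) (by linarith),
      show ν + 2 = (ν+1)+1 by ring, step (ν+1) (by linarith)]
  have habs4 : |dd ν 4 * u₀^4| = ((4:ℝ)+ν/2) * u₀^4 / (24*((ν+4)*((ν+3)*((ν+2)*((ν+1)*Real.Gamma (ν+1)))))) := by
    rw [abs_mul, dd_abs_eq ν hν 4, abs_of_pos (pow_pos hu 4)]
    push_cast
    rw [hg4]
    norm_num [Nat.factorial]
    ring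
  have hle := SS_le ν hν hν' h1 h2
  have heq : dd ν 0 * u₀^0 + dd ν 1 * u₀^1 + dd ν 2 * u₀^2 + dd ν 3 * u₀^3
      + |dd ν 4 * u₀^4| * 2
      = (ν/2 - (1+ν/2)*u₀/(ν+1) + (2+ν/2)*u₀^2/(2*(ν+1)*(ν+2))
      - (3+ν/2)*u₀^3/(6*(ν+1)*(ν+2)*(ν+3))
      + (4+ν/2)*u₀^4/(12*(ν+1)*(ν+2)*(ν+3)*(ν+4))) / Real.Gamma (ν+1) := by
    rw [habs4]
    unfold dd
    push_cast
    rw [hg1, hg2, hg3]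
    norm_num [Nat.factorial]
    field_simp
    ring
  have hneg : (ν/2 - (1+ν/2)*u₀/(ν+1) + (2+ν/2)*u₀^2/(2*(ν+1)*(ν+2))
      - (3+ν/2)*u₀^3/(6*(ν+1)*(ν+2)*(ν+3))
      + (4+ν/2)*u₀^4/(12*(ν+1)*(ν+2)*(ν+3)*(ν+4))) / Real.Gamma (ν+1) < 0 :=
    div_neg_of_neg_of_pos H hT
  linarith

lemma crit (ν : ℝ) (hν : 0 < ν) (hν' : ν ≤ 3/2) {u₀ : ℝ} (h1 : 1 ≤ u₀) (h2 : u₀ ≤ 2)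
    (H : ν/2 - (1+ν/2)*u₀/(ν+1) + (2+ν/2)*u₀^2/(2*(ν+1)*(ν+2))
      - (3+ν/2)*u₀^3/(6*(ν+1)*(ν+2)*(ν+3))
      + (4+ν/2)*u₀^4/(12*(ν+1)*(ν+2)*(ν+3)*(ν+4)) < 0) :
    (besselJPrimeFirstZero ν)^2 < 4*u₀ := by
  obtain ⟨u, hu, hSu⟩ : ∃ u ∈ Set.Ioo (0:ℝ) u₀, SS ν u = 0 := by
    have hcont : ContinuousOn (SS ν) (Set.Icc 0 u₀) := by
      intro w hw
      have hw3 : |w| < 3 := by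
        rw [abs_lt]; constructor <;> [linarith [hw.1]; linarith [hw.2]]
      exact ((hasDerivAt_psum (by norm_num : (0:ℝ) ≤ 2)
        (dd_abs ν hν hν') hw3).continuousAt).continuousWithinAt
    have hivt := intermediate_value_Ioo' (by linarith : (0:ℝ) ≤ u₀) hcont
    have hmem : (0:ℝ) ∈ Set.Ioo (SS ν u₀) (SS ν 0) :=
      ⟨SS_neg ν hν hν' h1 h2 H, SS_zero_pos ν hν⟩
    obtain ⟨u, hu1, hu2⟩ := hivt hmem
    exact ⟨u, hu1, hu2⟩
  have hu0 : 0 < u := hu.1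
  set x := 2 * Real.sqrt u with hxdef
  have hx : 0 < x := by positivity
  have hx2 : (x/2)^2 = u := by
    rw [hxdef]
    rw [show 2 * Real.sqrt u / 2 = Real.sqrt u by ring]
    exact Real.sq_sqrt hu0.le
  have hxsq : x^2 = 4*u := by nlinarith [hx2]
  have hxlt : x^2 < 4*u₀ := by nlinarith [hu.2]
  have hx3 : x < 3 := by nlinarith
  have hder := besselJ_hasDeriv ν hν hν' hx hx3
  rw [hx2, hSu, mul_zero] at hder
  have hzero : deriv (besselJ ν) x = 0 := hder.deriv
  have hxZ : x ∈ {x : ℝ | 0 < x ∧ deriv (besselJ ν) x = 0} := ⟨hx, hzero⟩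
  have hbdd : BddBelow {x : ℝ | 0 < x ∧ deriv (besselJ ν) x = 0} :=
    ⟨0, fun z hz => (hz.1).le⟩
  have hinf_le : besselJPrimeFirstZero ν ≤ x := csInf_le hbdd hxZ
  have hinf_nonneg : 0 ≤ besselJPrimeFirstZero ν :=
    le_csInf ⟨x, hxZ⟩ (fun z hz => hz.1.le)
  nlinarith

theorem second_third_neumann_AB_eigenvalues (α : ℝ) (hα : α ∈ Set.Ioc (0:ℝ) (1/2)) :
    (besselJPrimeFirstZero (1 - α))^2 < 4 ∧ (besselJPrimeFirstZero (1 + α))^2 < 8 := by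
  obtain ⟨hα0, hα2⟩ := hα
  have hp2 : α^2 ≤ α/2 := by nlinarith
  have hp3 : α^3 ≤ α/4 := by nlinarith [mul_le_mul_of_nonneg_left hp2 hα0.le]
  have hp4 : α^4 ≤ α/8 := by nlinarith [mul_le_mul_of_nonneg_left hp3 hα0.le]
  have hp5 : α^5 ≤ α/16 := by nlinarith [mul_le_mul_of_nonneg_left hp4 hα0.le]
  constructor
  · have h := crit (1-α) (by linarith) (by linarith) (le_refl 1) (by norm_num) ?_
    · linarith [h]
    · have k1 : (0:ℝ) < 1-α+1 := by linarith
      have k2 : (0:ℝ) < 1-α+2 := by linarith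
      have k3 : (0:ℝ) < 1-α+3 := by linarith
      have k4 : (0:ℝ) < 1-α+4 := by linarith
      have hD : (0:ℝ) < 12*(1-α+1)*(1-α+2)*(1-α+3)*(1-α+4) := by positivity
      have heq : (1-α)/2 - (1+(1-α)/2)*1/(1-α+1) + (2+(1-α)/2)*1^2/(2*(1-α+1)*(1-α+2))
          - (3+(1-α)/2)*1^3/(6*(1-α+1)*(1-α+2)*(1-α+3))
          + (4+(1-α)/2)*1^4/(12*(1-α+1)*(1-α+2)*(1-α+3)*(1-α+4))
          = (6*(1-α)*(1-α+1)*(1-α+2)*(1-α+3)*(1-α+4)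
            - 12*(1+(1-α)/2)*(1-α+2)*(1-α+3)*(1-α+4)
            + 6*(2+(1-α)/2)*(1-α+3)*(1-α+4) - 2*(3+(1-α)/2)*(1-α+4) + (4+(1-α)/2))
            / (12*(1-α+1)*(1-α+2)*(1-α+3)*(1-α+4)) := by
        field_simp
        ring
      rw [heq]
      apply div_neg_of_neg_of_pos _ hD
      nlinarith [hp2, hp3, hp4, hp5]
  · have h := crit (1+α) (by linarith) (by linarith) (by norm_num : (1:ℝ) ≤ 2) (le_refl 2) ?_
    · linarith [h]
    · have k1 : (0:ℝ) < 1+α+1 := by linarith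
      have k2 : (0:ℝ) < 1+α+2 := by linarith
      have k3 : (0:ℝ) < 1+α+3 := by linarith
      have k4 : (0:ℝ) < 1+α+4 := by linarith
      have hD : (0:ℝ) < 12*(1+α+1)*(1+α+2)*(1+α+3)*(1+α+4) := by positivity
      have heq : (1+α)/2 - (1+(1+α)/2)*2/(1+α+1) + (2+(1+α)/2)*2^2/(2*(1+α+1)*(1+α+2))
          - (3+(1+α)/2)*2^3/(6*(1+α+1)*(1+α+2)*(1+α+3))
          + (4+(1+α)/2)*2^4/(12*(1+α+1)*(1+α+2)*(1+α+3)*(1+α+4))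
          = (6*(1+α)*(1+α+1)*(1+α+2)*(1+α+3)*(1+α+4)
            - 24*(1+(1+α)/2)*(1+α+2)*(1+α+3)*(1+α+4)
            + 24*(2+(1+α)/2)*(1+α+3)*(1+α+4) - 16*(3+(1+α)/2)*(1+α+4) + 16*(4+(1+α)/2))
            / (12*(1+α+1)*(1+α+2)*(1+α+3)*(1+α+4)) := by
        field_simp
        ring
      rw [heq]
      apply div_neg_of_neg_of_pos _ hD
      nlinarith [hp2, hp3, hp4, hp5]
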